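/- Let D be the minimal Dress ring of ℝ(X). Then a rational function r ∈ ℝ(X) belongs to D if and only if there exist real polynomials f and γ such that γ has no real roots (γ(t) ≠ 0 for all t ∈ ℝ), deg f ≤ deg γ, and r = f/γ. -/

import Mathlib

open Polynomial

noncomputable section

def Dset : Set (RatFunc ℝ) := {s : RatFunc ℝ | ∃ x : RatFunc ℝ, s = (1 + x ^ 2)⁻¹}

def Dring : Subring (RatFunc ℝ) := Subring.closure Dset

lemma one_add_sq_ne_zero (x : RatFunc ℝ) : 1 + x ^ 2 ≠ 0 := by
  intro h
  set p := x.num with hp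
  set q := x.denom with hq
  have hq0 : q ≠ 0 := x.denom_ne_zero
  have hqq : algebraMap ℝ[X] (RatFunc ℝ) q ≠ 0 := RatFunc.algebraMap_ne_zero hq0
  have hx : algebraMap ℝ[X] (RatFunc ℝ) p / algebraMap ℝ[X] (RatFunc ℝ) q = x :=
    RatFunc.num_div_denom x
  have h2 : algebraMap ℝ[X] (RatFunc ℝ) (q ^ 2 + p ^ 2) = 0 := by
    rw [map_add, map_pow, map_pow]
    have := h
    rw [← hx] at this
    field_simp at this
    linear_combination this
  have h3 : q ^ 2 + p ^ 2 = 0 := RatFunc.algebraMap_injective ℝ (by simpa using h2)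
  have h4 : q = 0 := by
    apply Polynomial.funext
    intro t
    have h5 := congrArg (Polynomial.eval t) h3
    simp only [eval_add, eval_pow, eval_zero] at h5 ⊢
    nlinarith [h5, sq_nonneg (q.eval t), sq_nonneg (p.eval t)]
  exact hq0 h4

lemma C_mem_aux {c : ℝ} (h0 : 0 < c) (h1 : c ≤ 1) : RatFunc.C c ∈ Dring := by
  set r : ℝ := Real.sqrt (1 / c - 1) with hr
  have hnn : (0:ℝ) ≤ 1 / c - 1 := by
    have : 1 ≤ 1 / c := by rw [le_div_iff₀ h0]; linarith
    linarith
  have hsq : r ^ 2 = 1 / c - 1 := Real.sq_sqrt hnn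
  have hc : c = (1 + r ^ 2)⁻¹ := by
    rw [hsq]
    field_simp
    ring
  apply Subring.subset_closure
  refine ⟨RatFunc.C r, ?_⟩
  rw [hc, map_inv₀, map_add, map_one, map_pow]

lemma C_mem (c : ℝ) : RatFunc.C c ∈ Dring := by
  set k : ℤ := ⌈c⌉ with hk
  set s : ℝ := c - k + 1 with hs
  have h0 : 0 < s := by
    have := Int.ceil_lt_add_one c
    simp only [hs]
    push_cast
    linarith
  have h1 : s ≤ 1 := by
    have := Int.le_ceil c
    simp only [hs]
    push_cast
    linarith
  have hcs : RatFunc.C c = RatFunc.C s + ((k - 1 : ℤ) : RatFunc ℝ) := by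
    rw [← map_intCast (RatFunc.C (K := ℝ)), ← map_add]
    congr 1
    push_cast
    simp only [hs]
    ring
  rw [hcs]
  exact add_mem (C_mem_aux h0 h1) (intCast_mem Dring _)

lemma inv_one_add_sq_mem (x : RatFunc ℝ) : (1 + x ^ 2)⁻¹ ∈ Dring :=
  Subring.subset_closure ⟨x, rfl⟩

lemma mul_inv_one_add_sq_mem (x : RatFunc ℝ) : x * (1 + x ^ 2)⁻¹ ∈ Dring := by
  by_cases hx : 1 + x = 0
  · have hx' : x = -1 := by linear_combination hx
    have : x * (1 + x ^ 2)⁻¹ = RatFunc.C (-(2⁻¹ : ℝ)) := by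
      rw [hx', show RatFunc.C (-(2⁻¹:ℝ)) = -(2:RatFunc ℝ)⁻¹ by rw [map_neg, map_inv₀, map_ofNat]]
      norm_num
    rw [this]
    exact C_mem _
  · set u : RatFunc ℝ := (1 - x) / (1 + x) with hu
    have h1 : 1 + x ^ 2 ≠ 0 := one_add_sq_ne_zero x
    have h2 : 1 + u ^ 2 ≠ 0 := one_add_sq_ne_zero u
    have key : x * (1 + x ^ 2)⁻¹ = (1 + u ^ 2)⁻¹ - RatFunc.C (2⁻¹ : ℝ) := by
      have hC : RatFunc.C (2⁻¹ : ℝ) = (2 : RatFunc ℝ)⁻¹ := by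
        rw [map_inv₀, map_ofNat]
      have hu2 : 1 + u ^ 2 = 2 * (1 + x ^ 2) / (1 + x) ^ 2 := by
        rw [hu]; field_simp; ring
      rw [hC, hu2]
      have hxx : (1 + x) ^ 2 ≠ 0 := pow_ne_zero _ hx
      have h2x : (2 : RatFunc ℝ) ≠ 0 := by
        have := one_add_sq_ne_zero 1
        norm_num at this
        exact two_ne_zero
      field_simp
      ring
    rw [key]
    exact sub_mem (inv_one_add_sq_mem u) (C_mem _)

lemma lin_div_quad_mem (m d α β : ℝ) (hd : 0 < d) :
    (RatFunc.C α * RatFunc.X + RatFunc.C β) *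
      ((RatFunc.X - RatFunc.C m) ^ 2 + RatFunc.C d)⁻¹ ∈ Dring := by
  set e : ℝ := Real.sqrt d with he'
  have he : e ^ 2 = d := Real.sq_sqrt hd.le
  have he0 : e ≠ 0 := by positivity
  have hd0 : d ≠ 0 := hd.ne'
  set y : RatFunc ℝ := RatFunc.C e⁻¹ * (RatFunc.X - RatFunc.C m) with hy'
  have key1 : RatFunc.X - RatFunc.C m = RatFunc.C e * y := by
    rw [hy', ← mul_assoc, ← map_mul, mul_inv_cancel₀ he0, map_one, one_mul]
  have key2 : (RatFunc.X - RatFunc.C m) ^ 2 + RatFunc.C d = RatFunc.C d * (1 + y ^ 2) := by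
    rw [key1, mul_pow, ← map_pow, he]
    ring
  have hX : RatFunc.X = RatFunc.C e * y + RatFunc.C m := by linear_combination key1
  have hy1 : 1 + y ^ 2 ≠ 0 := one_add_sq_ne_zero y
  have hCd : RatFunc.C d ≠ 0 := fun h => hd0 ((map_eq_zero_iff _
    (RingHom.injective (RatFunc.C : ℝ →+* RatFunc ℝ))).mp h)
  have key : (RatFunc.C α * RatFunc.X + RatFunc.C β) *
      ((RatFunc.X - RatFunc.C m) ^ 2 + RatFunc.C d)⁻¹ =
      RatFunc.C (α * e / d) * (y * (1 + y ^ 2)⁻¹) +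
        RatFunc.C ((α * m + β) / d) * (1 + y ^ 2)⁻¹ := by
    rw [key2, hX, map_div₀, map_div₀, map_mul, map_add, map_mul]
    field_simp
    ring
  rw [key]
  exact add_mem (mul_mem (C_mem _) (mul_inv_one_add_sq_mem y))
    (mul_mem (C_mem _) (inv_one_add_sq_mem y))

lemma monic_quad_expand {q : ℝ[X]} (hm : q.Monic) (hdeg : q.natDegree = 2) :
    q = X ^ 2 + C (q.coeff 1) * X + C (q.coeff 0) := by
  have h2 : q.coeff 2 = 1 := by
    have := hm.coeff_natDegree
    rwa [hdeg] at this
  ext n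
  match n with
  | 0 => simp
  | 1 => simp
  | 2 => simp [h2, coeff_X_pow]
  | (n+3) =>
    have h3 : q.natDegree < n + 3 := by omega
    simp [coeff_eq_zero_of_natDegree_lt h3, coeff_X_pow,
      coeff_C, Polynomial.coeff_X]

lemma deg_le_one_expand {g : ℝ[X]} (hg : g.degree ≤ 1) :
    g = C (g.coeff 1) * X + C (g.coeff 0) := by
  have hnd : g.natDegree ≤ 1 := natDegree_le_iff_degree_le.mpr hg
  ext n
  match n with
  | 0 => simp
  | 1 => simp
  | (n+2) =>
    have h3 : g.natDegree < n + 2 := by omega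
    simp [coeff_eq_zero_of_natDegree_lt h3, coeff_C, Polynomial.coeff_X]

lemma quad_vertex {q : ℝ[X]} (hm : q.Monic) (hdeg : q.natDegree = 2)
    (hroot : ∀ t : ℝ, q.eval t ≠ 0) :
    ∃ m d : ℝ, 0 < d ∧ q = (X - C m) ^ 2 + C d := by
  set b := q.coeff 1 with hb
  set c := q.coeff 0 with hc
  set m : ℝ := -b / 2 with hm'
  set d : ℝ := c - m ^ 2 with hd'
  have hbm : b = -2 * m := by rw [hm']; ring
  have hcd : c = m ^ 2 + d := by rw [hd']; ring
  have hexp : q = (X - C m) ^ 2 + C d := by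
    rw [monic_quad_expand hm hdeg, ← hb, ← hc, hbm, hcd]
    simp only [map_mul, map_neg, map_add, map_pow, map_ofNat]
    ring
  refine ⟨m, d, ?_, hexp⟩
  have hdne : d ≠ 0 := by
    have := hroot m
    rw [hexp] at this
    simpa using this
  rcases lt_or_gt_of_ne hdne with hneg | hpos
  · exfalso
    apply hroot (m + Real.sqrt (-d))
    rw [hexp]
    simp only [eval_add, eval_pow, eval_sub, eval_X, eval_C]
    have : Real.sqrt (-d) ^ 2 = -d := Real.sq_sqrt (by linarith)
    nlinarith [this]
  · exact hpos

lemma div_quad_mem {q f : ℝ[X]} (hm : q.Monic) (hdeg : q.natDegree = 2)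
    (hroot : ∀ t : ℝ, q.eval t ≠ 0) (hf : f.degree ≤ q.degree) :
    algebraMap ℝ[X] (RatFunc ℝ) f / algebraMap ℝ[X] (RatFunc ℝ) q ∈ Dring := by
  obtain ⟨m, d, hd, hexp⟩ := quad_vertex hm hdeg hroot
  have hq0 : q ≠ 0 := hm.ne_zero
  have hqdeg : q.degree = 2 := by
    rw [degree_eq_natDegree hq0, hdeg]; rfl
  have hfnd : f.natDegree ≤ 2 := natDegree_le_iff_degree_le.mpr (by rwa [hqdeg] at hf)
  set a₂ := f.coeff 2 with ha₂
  set g : ℝ[X] := f - C a₂ * q with hg'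
  have hq2 : q.coeff 2 = 1 := by
    have := hm.coeff_natDegree; rwa [hdeg] at this
  have hgdeg : g.degree ≤ 1 := by
    rw [degree_le_iff_coeff_zero]
    intro k hk
    have hk2 : 2 ≤ k := by exact_mod_cast Nat.add_one_le_iff.mpr (by exact_mod_cast hk)
    rcases eq_or_lt_of_le hk2 with h | h
    · rw [hg', coeff_sub, coeff_C_mul, ← h, hq2, ← ha₂]
      ring
    · have h1 : f.coeff k = 0 := coeff_eq_zero_of_natDegree_lt (by omega)
      have h2 : q.coeff k = 0 := coeff_eq_zero_of_natDegree_lt (by omega)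
      rw [hg', coeff_sub, coeff_C_mul, h1, h2]
      ring
  set φ := algebraMap ℝ[X] (RatFunc ℝ) with hφ
  have hQ : φ q = (RatFunc.X - RatFunc.C m) ^ 2 + RatFunc.C d := by
    rw [hexp]
    simp [hφ, map_add, map_pow, map_sub, RatFunc.algebraMap_C, RatFunc.algebraMap_X]
  have hQ0 : φ q ≠ 0 := RatFunc.algebraMap_ne_zero hq0
  have hsplit : φ f / φ q = RatFunc.C a₂ + φ g * (φ q)⁻¹ := by
    have hfe : f = C a₂ * q + g := by rw [hg']; ring
    rw [hfe, map_add, map_mul, RatFunc.algebraMap_C]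
    field_simp
  have hG : φ g = RatFunc.C (g.coeff 1) * RatFunc.X + RatFunc.C (g.coeff 0) := by
    conv_lhs => rw [deg_le_one_expand hgdeg]
    simp [hφ, map_add, map_mul, RatFunc.algebraMap_C, RatFunc.algebraMap_X]
  rw [hsplit, hG, hQ]
  exact add_mem (C_mem _) (lin_div_quad_mem m d _ _ hd)

lemma main_monic (n : ℕ) : ∀ γ f : ℝ[X], γ.Monic → (∀ t : ℝ, γ.eval t ≠ 0) →
    γ.natDegree = n → f.degree ≤ γ.degree →
    algebraMap ℝ[X] (RatFunc ℝ) f / algebraMap ℝ[X] (RatFunc ℝ) γ ∈ Dring := by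
  induction n using Nat.strong_induction_on with
  | _ n IH =>
    intro γ f hmon hroot hn hf
    set φ := algebraMap ℝ[X] (RatFunc ℝ) with hφ
    rcases Nat.eq_zero_or_pos n with h0 | hpos
    · -- γ = 1, f constant
      have hγ1 : γ = 1 := hmon.natDegree_eq_zero.mp (hn.trans h0)
      have hfc : f = C (f.coeff 0) := by
        apply eq_C_of_degree_le_zero
        rwa [hγ1, degree_one] at hf
      rw [hγ1, map_one, div_one, hfc, RatFunc.algebraMap_C]
      exact C_mem _
    · -- pick a monic irreducible quadratic factor
      have hγ0 : γ ≠ 0 := hmon.ne_zero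
      have hnu : ¬ IsUnit γ := by
        intro h
        have := natDegree_eq_zero_of_isUnit h
        omega
      obtain ⟨q, hqm, hqi, hqd⟩ := Polynomial.exists_monic_irreducible_factor γ hnu
      obtain ⟨γ₁, hγfac⟩ := hqd
      have hq0 : q ≠ 0 := hqm.ne_zero
      have hγ₁0 : γ₁ ≠ 0 := by
        intro h; rw [h, mul_zero] at hγfac; exact hγ0 hγfac
      have hγ₁m : γ₁.Monic := hqm.of_mul_monic_left (hγfac ▸ hmon)
      have hqroot : ∀ t : ℝ, q.eval t ≠ 0 := by
        intro t ht
        apply hroot t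
        rw [hγfac, eval_mul, ht, zero_mul]
      have hγ₁root : ∀ t : ℝ, γ₁.eval t ≠ 0 := by
        intro t ht
        apply hroot t
        rw [hγfac, eval_mul, ht, mul_zero]
      have hqnd : q.natDegree = 2 := by
        have hle : q.natDegree ≤ 2 := hqi.natDegree_le_two
        have hge : 1 ≤ q.natDegree := hqi.natDegree_pos
        interval_cases h : q.natDegree
        · exfalso
          -- degree-1 monic polynomial has a real root
          have hq1 : q.degree ≤ 1 := by
            rw [degree_eq_natDegree hq0, h]; exact_mod_cast le_refl 1
          have hco : q.coeff 1 = 1 := by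
            have := hqm.coeff_natDegree; rwa [h] at this
          have := hqroot (-(q.coeff 0))
          rw [deg_le_one_expand hq1] at this
          simp [hco] at this
        · rfl
      -- degrees
      have hnsum : n = 2 + γ₁.natDegree := by
        rw [← hn, hγfac, natDegree_mul hq0 hγ₁0, hqnd]
      -- division of f by γ₁
      set s := f %ₘ γ₁ with hs'
      set h := f /ₘ γ₁ with hh'
      have hfeq : f = s + γ₁ * h := (modByMonic_add_div f γ₁).symm
      have hsdeg : s.degree ≤ γ₁.degree := (degree_modByMonic_lt f hγ₁m).le
      have hfnd : f.natDegree ≤ n := hn ▸ natDegree_le_natDegree hf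
      have hhnd : h.natDegree ≤ 2 := by
        rw [hh', natDegree_divByMonic f hγ₁m]
        omega
      have hhdeg : h.degree ≤ q.degree := by
        refine le_trans (degree_le_natDegree) ?_
        rw [degree_eq_natDegree hq0, hqnd]
        exact_mod_cast hhnd
      -- key identity
      have hQ0 : φ q ≠ 0 := RatFunc.algebraMap_ne_zero hq0
      have hΓ₁0 : φ γ₁ ≠ 0 := RatFunc.algebraMap_ne_zero hγ₁0
      have key : φ f / φ γ = φ h / φ q + (φ s / φ γ₁) * (φ q)⁻¹ := by
        rw [hγfac, hfeq]
        push_cast [map_add, map_mul]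
        field_simp
        ring
      rw [key]
      refine add_mem ?_ (mul_mem ?_ ?_)
      · exact div_quad_mem hqm hqnd hqroot hhdeg
      · exact IH γ₁.natDegree (by omega) γ₁ s hγ₁m hγ₁root rfl hsdeg
      · have := div_quad_mem (f := 1) hqm hqnd hqroot
          (by rw [degree_one, degree_eq_natDegree hq0, hqnd]; exact_mod_cast Nat.zero_le 2)
        rwa [map_one, one_div] at this

lemma backward_mem {f γ : ℝ[X]} (hroot : ∀ t : ℝ, γ.eval t ≠ 0)
    (hdeg : f.degree ≤ γ.degree) :
    algebraMap ℝ[X] (RatFunc ℝ) f / algebraMap ℝ[X] (RatFunc ℝ) γ ∈ Dring := by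
  set φ := algebraMap ℝ[X] (RatFunc ℝ) with hφ
  have hγ0 : γ ≠ 0 := fun h => hroot 0 (by simp [h])
  set c := γ.leadingCoeff with hc
  have hc0 : c ≠ 0 := leadingCoeff_ne_zero.mpr hγ0
  have hci0 : c⁻¹ ≠ 0 := inv_ne_zero hc0
  have hmon : (γ * C c⁻¹).Monic := monic_mul_leadingCoeff_inv hγ0
  have hroot' : ∀ t : ℝ, (γ * C c⁻¹).eval t ≠ 0 := by
    intro t
    simp only [eval_mul, eval_C]
    exact mul_ne_zero (hroot t) hci0
  have hdeg' : (f * C c⁻¹).degree ≤ (γ * C c⁻¹).degree := by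
    rwa [degree_mul_C hci0, degree_mul_C hci0]
  have key : φ f / φ γ = φ (f * C c⁻¹) / φ (γ * C c⁻¹) := by
    rw [map_mul, map_mul, RatFunc.algebraMap_C]
    have hCc : RatFunc.C (c⁻¹ : ℝ) ≠ 0 := fun h => hci0 ((map_eq_zero_iff _
      (RingHom.injective (RatFunc.C : ℝ →+* RatFunc ℝ))).mp h)
    rw [mul_div_mul_right _ _ hCc]
  rw [key]
  exact main_monic (γ * C c⁻¹).natDegree (γ * C c⁻¹) (f * C c⁻¹) hmon hroot' rfl hdeg'

lemma degree_sq_le_add_sq (p q : ℝ[X]) : (q ^ 2).degree ≤ (p ^ 2 + q ^ 2).degree := by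
  rcases eq_or_ne p 0 with hp | hp
  · simp [hp]
  rcases eq_or_ne q 0 with hq | hq
  · simp [hq]
  rcases lt_trichotomy ((p ^ 2).degree) ((q ^ 2).degree) with h | h | h
  · rw [degree_add_eq_right_of_degree_lt h]
  · have hlc : (p ^ 2).leadingCoeff + (q ^ 2).leadingCoeff ≠ 0 := by
      rw [leadingCoeff_pow, leadingCoeff_pow]
      have h1 : p.leadingCoeff ≠ 0 := leadingCoeff_ne_zero.mpr hp
      have h2 : q.leadingCoeff ≠ 0 := leadingCoeff_ne_zero.mpr hq
      positivity
    rw [degree_add_eq_of_leadingCoeff_add_ne_zero hlc, h, max_self]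
  · rw [degree_add_eq_left_of_degree_lt h]
    exact h.le

def Sring : Subring (RatFunc ℝ) where
  carrier := {r : RatFunc ℝ | ∃ f γ : Polynomial ℝ, (∀ t : ℝ, γ.eval t ≠ 0) ∧
    f.degree ≤ γ.degree ∧
    r = algebraMap (Polynomial ℝ) (RatFunc ℝ) f / algebraMap (Polynomial ℝ) (RatFunc ℝ) γ}
  one_mem' := ⟨1, 1, by simp, le_refl _, by simp⟩
  zero_mem' := ⟨0, 1, by simp, by simp, by simp⟩
  neg_mem' := by
    rintro r ⟨f, γ, h1, h2, rfl⟩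
    exact ⟨-f, γ, h1, by rwa [degree_neg], by rw [map_neg, neg_div]⟩
  add_mem' := by
    rintro r r' ⟨f₁, γ₁, h1, d1, rfl⟩ ⟨f₂, γ₂, h2, d2, rfl⟩
    have hγ₁ : γ₁ ≠ 0 := fun h => h1 0 (by simp [h])
    have hγ₂ : γ₂ ≠ 0 := fun h => h2 0 (by simp [h])
    refine ⟨f₁ * γ₂ + f₂ * γ₁, γ₁ * γ₂, ?_, ?_, ?_⟩
    · intro t
      simp only [eval_mul]
      exact mul_ne_zero (h1 t) (h2 t)
    · refine le_trans (degree_add_le _ _) (max_le ?_ ?_)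
      · rw [degree_mul, degree_mul]
        exact add_le_add_left d1 _
      · rw [degree_mul, degree_mul]
        rw [add_comm γ₁.degree γ₂.degree]
        exact add_le_add_left d2 _
    · have n1 : algebraMap ℝ[X] (RatFunc ℝ) γ₁ ≠ 0 := RatFunc.algebraMap_ne_zero hγ₁
      have n2 : algebraMap ℝ[X] (RatFunc ℝ) γ₂ ≠ 0 := RatFunc.algebraMap_ne_zero hγ₂
      push_cast [map_add, map_mul]
      field_simp
      try ring
  mul_mem' := by
    rintro r r' ⟨f₁, γ₁, h1, d1, rfl⟩ ⟨f₂, γ₂, h2, d2, rfl⟩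
    have hγ₁ : γ₁ ≠ 0 := fun h => h1 0 (by simp [h])
    have hγ₂ : γ₂ ≠ 0 := fun h => h2 0 (by simp [h])
    refine ⟨f₁ * f₂, γ₁ * γ₂, ?_, ?_, ?_⟩
    · intro t
      simp only [eval_mul]
      exact mul_ne_zero (h1 t) (h2 t)
    · rw [degree_mul, degree_mul]
      exact add_le_add d1 d2
    · have n1 : algebraMap ℝ[X] (RatFunc ℝ) γ₁ ≠ 0 := RatFunc.algebraMap_ne_zero hγ₁
      have n2 : algebraMap ℝ[X] (RatFunc ℝ) γ₂ ≠ 0 := RatFunc.algebraMap_ne_zero hγ₂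
      push_cast [map_mul]
      field_simp

lemma gens_subset : Dset ⊆ (Sring : Set (RatFunc ℝ)) := by
  rintro r ⟨x, rfl⟩
  set p := x.num with hp
  set q := x.denom with hq
  have hq0 : q ≠ 0 := x.denom_ne_zero
  have hcop : IsCoprime p q := RatFunc.isCoprime_num_denom x
  obtain ⟨a, b, hab⟩ := hcop
  have hroot : ∀ t : ℝ, (p ^ 2 + q ^ 2).eval t ≠ 0 := by
    intro t ht
    simp only [eval_add, eval_pow] at ht
    have hpt : p.eval t = 0 := by nlinarith [sq_nonneg (p.eval t), sq_nonneg (q.eval t)]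
    have hqt : q.eval t = 0 := by nlinarith [sq_nonneg (p.eval t), sq_nonneg (q.eval t)]
    have := congrArg (Polynomial.eval t) hab
    simp [hpt, hqt] at this
  refine ⟨q ^ 2, p ^ 2 + q ^ 2, hroot, degree_sq_le_add_sq p q, ?_⟩
  have hγ0 : p ^ 2 + q ^ 2 ≠ 0 := fun h => hroot 0 (by simp [h])
  have n1 : algebraMap ℝ[X] (RatFunc ℝ) q ≠ 0 := RatFunc.algebraMap_ne_zero hq0
  have n2 : algebraMap ℝ[X] (RatFunc ℝ) (p ^ 2 + q ^ 2) ≠ 0 := RatFunc.algebraMap_ne_zero hγ0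
  have hx : algebraMap ℝ[X] (RatFunc ℝ) p / algebraMap ℝ[X] (RatFunc ℝ) q = x :=
    RatFunc.num_div_denom x
  have h1 : 1 + x ^ 2 ≠ 0 := one_add_sq_ne_zero x
  rw [← hx]
  have key : 1 + (algebraMap ℝ[X] (RatFunc ℝ) p / algebraMap ℝ[X] (RatFunc ℝ) q) ^ 2
      = algebraMap ℝ[X] (RatFunc ℝ) (p ^ 2 + q ^ 2) /
        (algebraMap ℝ[X] (RatFunc ℝ) q) ^ 2 := by
    push_cast [map_add, map_pow]
    field_simp
    ring
  rw [key, inv_div, map_add, map_pow, map_pow]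

theorem mem_minimalDressRing_ratFunc_iff (r : RatFunc ℝ) :
    r ∈ Subring.closure {s : RatFunc ℝ | ∃ x : RatFunc ℝ, s = (1 + x ^ 2)⁻¹} ↔
      ∃ f γ : Polynomial ℝ, (∀ t : ℝ, γ.eval t ≠ 0) ∧ f.degree ≤ γ.degree ∧
        r = algebraMap (Polynomial ℝ) (RatFunc ℝ) f /
            algebraMap (Polynomial ℝ) (RatFunc ℝ) γ := by
  constructor
  · intro hr
    have : r ∈ Sring := Subring.closure_le.mpr gens_subset hr
    exact this
  · rintro ⟨f, γ, h1, h2, rfl⟩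
    exact backward_mem h1 h2
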